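/- Let N ≥ 3, let R = ℝ[ε]/(ε²) be the ring of dual numbers, let y_1,…,y_{N−1} be nonzero real numbers, and let 2 ≤ j ≤ N−1. Define y'_{j−1} = y_{j−1} − (y_{j−1}/y_j)ε, y'_j = y_j + ε, and y'_i = y_i for i ≠ j−1, j. Then in the N×N matrices over R one has the exact identity ( I + Σ_{i=1}^{N−1} y_i e_{i,i+1} ) ( I + ε e_{j,j+1} ) = ( I + (y_{j−1}/y_j) ε e_{j−1,j} ) ( I + Σ_{i=1}^{N−1} y'_i e_{i,i+1} ). -/

import Mathlib

noncomputable section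

/-- The superdiagonal matrix `Σ_{i=1}^{N−1} c_i e_{i,i+1}` over the dual numbers
(the entry at 0-based position `(a, a+1)` is `c_{a+1}`). -/
def sdiagD (N : ℕ) (c : ℕ → DualNumber ℝ) : Matrix (Fin N) (Fin N) (DualNumber ℝ) :=
  Matrix.of fun a b => if b.val = a.val + 1 then c (a.val + 1) else 0

theorem sdiag_mul_std (N : ℕ) (c : ℕ → DualNumber ℝ) (p q : Fin N) (hp : 1 ≤ p.val)
    (hp' : p.val - 1 < N) (d : DualNumber ℝ) :
    sdiagD N c * Matrix.single p q d
      = Matrix.single (⟨p.val - 1, hp'⟩ : Fin N) q (c p.val * d) := by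
  apply Matrix.ext; intro a b
  rw [Matrix.mul_apply, Finset.sum_eq_single p]
  · simp only [sdiagD, Matrix.of_apply, Matrix.single, ite_and, mul_ite, mul_zero,
      ite_mul, zero_mul, if_pos rfl]
    by_cases h1 : (p : ℕ) = a.val + 1 <;> by_cases h2 : b = q <;>
      simp_all [Fin.ext_iff] <;> first | (split_ifs <;> first | rfl | omega) | omega
  · intro k _ hk
    simp [Matrix.single, hk.symm]
  · simp

theorem std_mul_sdiag (N : ℕ) (c : ℕ → DualNumber ℝ) (p q : Fin N) (hq : q.val + 1 < N)
    (d : DualNumber ℝ) :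
    Matrix.single p q d * sdiagD N c
      = Matrix.single p (⟨q.val + 1, hq⟩ : Fin N) (d * c (q.val + 1)) := by
  apply Matrix.ext; intro a b
  rw [Matrix.mul_apply, Finset.sum_eq_single q]
  · simp only [sdiagD, Matrix.of_apply, Matrix.single, ite_and, mul_ite, mul_zero,
      ite_mul, zero_mul]
    by_cases h1 : a = p <;> by_cases h2 : (b : ℕ) = q.val + 1 <;>
      simp_all [Fin.ext_iff] <;> first | (split_ifs <;> first | rfl | omega) | omega
  · intro k _ hk
    simp [Matrix.single, Ne.symm hk]
  · simp

set_option maxHeartbeats 1000000 in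
/-- the exact identity over the dual numbers `ℝ[ε]/(ε²)`:
`(I + Σ_{i=1}^{N−1} y_i e_{i,i+1})(I + ε e_{j,j+1})
  = (I + (y_{j−1}/y_j) ε e_{j−1,j})(I + Σ_{i=1}^{N−1} y'_i e_{i,i+1})`,
where `y'_{j−1} = y_{j−1} − (y_{j−1}/y_j) ε`, `y'_j = y_j + ε` and `y'_i = y_i` otherwise. -/
theorem jacobi_dual_number_commutation (N : ℕ) (hN : 3 ≤ N)
    (y : ℕ → ℝ) (hy : ∀ i, 1 ≤ i → i ≤ N - 1 → y i ≠ 0)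
    (j : ℕ) (hj1 : 2 ≤ j) (hj2 : j ≤ N - 1) :
    ((1 : Matrix (Fin N) (Fin N) (DualNumber ℝ))
        + sdiagD N fun i => algebraMap ℝ (DualNumber ℝ) (y i)) *
      (1 + Matrix.single (⟨j - 1, by omega⟩ : Fin N) (⟨j, by omega⟩ : Fin N)
            DualNumber.eps)
    = (1 + Matrix.single (⟨j - 2, by omega⟩ : Fin N) (⟨j - 1, by omega⟩ : Fin N)
            (algebraMap ℝ (DualNumber ℝ) (y (j - 1) / y j) * DualNumber.eps)) *
      (1 + sdiagD N fun i =>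
        if i = j - 1 then
          algebraMap ℝ (DualNumber ℝ) (y (j - 1))
            - algebraMap ℝ (DualNumber ℝ) (y (j - 1) / y j) * DualNumber.eps
        else if i = j then algebraMap ℝ (DualNumber ℝ) (y j) + DualNumber.eps
        else algebraMap ℝ (DualNumber ℝ) (y i)) := by
  have hyj : y j ≠ 0 := hy j (by omega) hj2
  set c : ℕ → DualNumber ℝ := fun i => algebraMap ℝ (DualNumber ℝ) (y i) with hc
  set c' : ℕ → DualNumber ℝ := fun i =>
    if i = j - 1 then
      algebraMap ℝ (DualNumber ℝ) (y (j - 1))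
        - algebraMap ℝ (DualNumber ℝ) (y (j - 1) / y j) * DualNumber.eps
    else if i = j then algebraMap ℝ (DualNumber ℝ) (y j) + DualNumber.eps
    else algebraMap ℝ (DualNumber ℝ) (y i) with hc'
  set S := sdiagD N c with hS
  set S' := sdiagD N c' with hS'
  set E1 : Matrix (Fin N) (Fin N) (DualNumber ℝ) := Matrix.single
    (⟨j - 1, by omega⟩ : Fin N) (⟨j, by omega⟩ : Fin N) DualNumber.eps with hE1
  set E2 : Matrix (Fin N) (Fin N) (DualNumber ℝ) := Matrix.single
    (⟨j - 2, by omega⟩ : Fin N) (⟨j - 1, by omega⟩ : Fin N)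
    (algebraMap ℝ (DualNumber ℝ) (y (j - 1) / y j) * DualNumber.eps) with hE2
  have hB : S * E1 = E2 * S' := by
    rw [hS, hE1, sdiag_mul_std N c _ _ (by simp; omega) (by omega),
      hE2, hS', std_mul_sdiag N c' _ _ (by simp; omega)]
    have h1 : (⟨j - 1, by omega⟩ : Fin N).val - 1 = j - 2 := by simp; omega
    have h2 : (⟨j - 1, by omega⟩ : Fin N).val + 1 = j := by simp; omega
    have h3 : c' j = algebraMap ℝ (DualNumber ℝ) (y j) + DualNumber.eps := by
      simp [hc', show ¬ j = j - 1 by omega]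
    simp only [h1, h2, h3]
    rw [hc]
    simp only []
    rw [mul_add, mul_assoc _ DualNumber.eps DualNumber.eps, DualNumber.eps_mul_eps, mul_zero,
      add_zero, mul_right_comm, ← map_mul, div_mul_cancel₀ _ hyj]
  have key : S + E1 = E2 + S' := by
    apply Matrix.ext; intro a b
    simp only [Matrix.add_apply, hS, hS', hE1, hE2, sdiagD, Matrix.of_apply,
      Matrix.single, hc, hc', ite_and, Fin.ext_iff]
    split_ifs <;>
      first
      | omega
      | ((try rw [show a.val + 1 = j - 1 from by omega]);
         (try rw [show a.val + 1 = j from by omega]); ring)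
  rw [mul_add, mul_one, add_mul, one_mul, mul_add, mul_one, add_mul, one_mul, hB]
  calc 1 + S + (E1 + E2 * S') = 1 + ((S + E1) + E2 * S') := by abel
    _ = 1 + ((E2 + S') + E2 * S') := by rw [key]
    _ = 1 + E2 + (S' + E2 * S') := by abel
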